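/- Let m ≥ 2 be even, let ℓ = 2^k be a power of 2, and suppose ℓ divides n. Let d = n if m = 2 and d = 2n if m > 2 (so ℓ divides d). Then there exists a partition V(ℤ_m^n) = V₁ ∪ … ∪ V_ℓ such that for every i ∈ [ℓ] and every vertex v of ℤ_m^n, the number of neighbours of v lying in V_i equals exactly d/ℓ. -/

import Mathlib

open Finset Classical

noncomputable section

/-- The discrete torus `ℤ_m^n`: vertex set `{0,…,m-1}^n`, with `x ~ y` iff they differ by
`±1 (mod m)` in exactly one coordinate. -/
def torus (m n : ℕ) : SimpleGraph (Fin n → ZMod m) :=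
  SimpleGraph.fromRel (fun x y => ∃ i, x i = y i + 1 ∧ ∀ j, j ≠ i → x j = y j)

/-- The neighbourhood `N(X)` of a set of vertices: all vertices with a neighbour in `X`. -/
def nbhd {V : Type*} [Fintype V] (G : SimpleGraph V) (X : Finset V) : Finset V :=
  univ.filter fun v => ∃ x ∈ X, G.Adj x v

/-- If `ℓ = 2^k` divides `n`, then the vertices of `ℤ_m^n` can be partitioned into classes
`V₁, …, V_ℓ` (encoded as the fibres of a map `c : V → Fin ℓ`) such that every vertex has
exactly `d/ℓ` neighbours in each class, `d` being the degree of the torus. -/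
theorem torus_equitable_partition (m n k : ℕ) [NeZero m] (hm : Even m) (hm2 : 2 ≤ m)
    (hdvd : 2 ^ k ∣ n) :
    ∃ c : (Fin n → ZMod m) → Fin (2 ^ k),
      ∀ (i : Fin (2 ^ k)) (v : Fin n → ZMod m),
        (univ.filter fun u => (torus m n).Adj v u ∧ c u = i).card =
          (if m = 2 then n else 2 * n) / 2 ^ k := by
  classical
  haveI : Fact (1 < m) := ⟨hm2⟩
  set ℓ := 2 ^ k with hℓ
  have hℓpos : 0 < ℓ := pow_pos (by norm_num) k
  set t := n / ℓ with ht
  have hn : ℓ * t = n := Nat.mul_div_cancel' hdvd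
  have hcardA : Fintype.card (Fin k → ZMod 2) = ℓ := by
    simp [hℓ, ZMod.card]
  let e : (Fin k → ZMod 2) ≃ Fin ℓ := Fintype.equivFinOfCardEq hcardA
  let q : Fin n ≃ Fin ℓ × Fin t :=
    Fintype.equivOfCardEq (by simp [hn])
  let w : Fin n → (Fin k → ZMod 2) := fun j => e.symm (q j).1
  have h2m : (2 : ℕ) ∣ m := hm.two_dvd
  let φ : ZMod m →+* ZMod 2 := ZMod.castHom h2m (ZMod 2)
  let C : (Fin n → ZMod m) → (Fin k → ZMod 2) := fun x => ∑ j, φ (x j) • w j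
  -- key: updating coordinate j by +δ shifts colour by φ δ • w j
  have hCupd : ∀ (v : Fin n → ZMod m) (j : Fin n) (δ : ZMod m),
      C (Function.update v j (v j + δ)) = C v + φ δ • w j := by
    intro v j δ
    have hfun : ∀ j', φ (Function.update v j (v j + δ) j') • w j'
        = Function.update (fun j' => φ (v j') • w j') j (φ (v j + δ) • w j) j' := by
      intro j'
      by_cases h : j' = j
      · subst h; simp
      · simp [Function.update_of_ne h]
    show (∑ j', φ (Function.update v j (v j + δ) j') • w j') = _
    rw [Finset.sum_congr rfl fun j' _ => hfun j',
      Finset.sum_update_of_mem (mem_univ j), map_add, add_smul]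
    have hsum : C v = ∑ x ∈ univ \ {j}, φ (v x) • w x + φ (v j) • w j :=
      Finset.sum_eq_sum_sdiff_singleton_add (mem_univ j) _
    rw [hsum]; abel
  have hφone : ∀ δ : ZMod m, δ ∈ ({1, -1} : Finset (ZMod m)) → φ δ = 1 := by
    intro δ hδ
    rcases mem_insert.mp hδ with h | h
    · subst h; exact map_one φ
    · rw [mem_singleton] at h; subst h; rw [map_neg, map_one]; decide
  have hδ0 : ∀ δ : ZMod m, δ ∈ ({1, -1} : Finset (ZMod m)) → δ ≠ 0 := by
    intro δ hδ
    rcases mem_insert.mp hδ with h | h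
    · subst h; exact one_ne_zero
    · rw [mem_singleton] at h; subst h; exact neg_ne_zero.mpr one_ne_zero
  refine ⟨fun x => e (C x), fun i v => ?_⟩
  set a' := e.symm i with ha'
  set S : Finset (Fin n) := univ.filter fun j => w j = a' - C v with hSdef
  set D : Finset (ZMod m) := {1, -1} with hD
  set F : Fin n × ZMod m → (Fin n → ZMod m) :=
    fun p => Function.update v p.1 (v p.1 + p.2) with hF
  -- colour of F (j, δ) for δ ∈ D
  have hCF : ∀ (j : Fin n) (δ : ZMod m), δ ∈ D → C (F (j, δ)) = C v + w j := by
    intro j δ hδ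
    rw [hF]; dsimp only
    rw [hCupd, hφone δ hδ, one_smul]
  -- the neighbour set equals the image of S ×ˢ D under F
  have himg : (univ.filter fun u => (torus m n).Adj v u ∧ e (C u) = i)
      = (S ×ˢ D).image F := by
    ext u
    simp only [mem_filter, mem_univ, true_and, Finset.mem_image, Finset.mem_product]
    constructor
    · rintro ⟨hadj, hcol⟩
      have hCu : C u = a' := by rwa [Equiv.apply_eq_iff_eq_symm_apply] at hcol
      rw [torus, SimpleGraph.fromRel_adj] at hadj
      obtain ⟨hne, hrel⟩ := hadj
      have key : ∃ j δ, δ ∈ D ∧ u = F (j, δ) := by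
        rcases hrel with ⟨j, h1, h2⟩ | ⟨j, h1, h2⟩
        · -- v j = u j + 1
          refine ⟨j, -1, by simp [hD], ?_⟩
          funext j'
          by_cases hj : j' = j
          · subst hj
            rw [hF]; dsimp only
            rw [Function.update_self]
            have : u j' = v j' - 1 := eq_sub_of_add_eq h1.symm
            rw [this, sub_eq_add_neg]
          · rw [hF]; dsimp only
            rw [Function.update_of_ne hj]
            exact (h2 j' hj).symm
        · -- u j = v j + 1
          refine ⟨j, 1, by simp [hD], ?_⟩
          funext j'
          by_cases hj : j' = j
          · subst hj
            rw [hF]; dsimp only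
            rw [Function.update_self]; exact h1
          · rw [hF]; dsimp only
            rw [Function.update_of_ne hj]
            exact h2 j' hj
      obtain ⟨j, δ, hδ, hu⟩ := key
      refine ⟨(j, δ), ⟨?_, hδ⟩, hu.symm⟩
      rw [hSdef, mem_filter]
      refine ⟨mem_univ _, ?_⟩
      have : C u = C v + w j := by rw [hu]; exact hCF j δ hδ
      rw [hCu] at this
      rw [eq_sub_iff_add_eq']
      exact this.symm
    · rintro ⟨⟨j, δ⟩, ⟨hjS, hδ⟩, hu⟩
      subst hu
      have hwj : w j = a' - C v := (mem_filter.mp hjS).2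
      have hcol : C (F (j, δ)) = a' := by
        rw [hCF j δ hδ, hwj, add_sub_cancel]
      constructor
      · rw [torus, SimpleGraph.fromRel_adj]
        constructor
        · intro hvu
          have := congrFun hvu j
          rw [hF] at this; dsimp only at this
          rw [Function.update_self] at this
          exact hδ0 δ hδ (by linear_combination -this)
        · rcases mem_insert.mp hδ with h | h
          · subst h
            right
            refine ⟨j, ?_, fun j' hj' => ?_⟩
            · rw [hF]; dsimp only; rw [Function.update_self]
            · rw [hF]; dsimp only; rw [Function.update_of_ne hj']
          · rw [mem_singleton] at h; subst h
            left
            refine ⟨j, ?_, fun j' hj' => ?_⟩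
            · rw [hF]; dsimp only
              rw [Function.update_self, add_assoc]
              simp
            · rw [hF]; dsimp only; rw [Function.update_of_ne hj']
      · rw [hcol, ha', Equiv.apply_symm_apply]
  -- injectivity of F on S ×ˢ D
  have hinj : Set.InjOn F ↑(S ×ˢ D) := by
    rintro ⟨j1, δ1⟩ h1 ⟨j2, δ2⟩ h2 heq
    rw [Finset.coe_product] at h1 h2
    obtain ⟨-, hδ1⟩ := h1
    obtain ⟨-, hδ2⟩ := h2
    have hδ1' : δ1 ≠ 0 := hδ0 δ1 hδ1
    have hj : j1 = j2 := by
      by_contra hj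
      have := congrFun heq j1
      rw [hF] at this; dsimp only at this
      rw [Function.update_self, Function.update_of_ne hj] at this
      exact hδ1' (by linear_combination this)
    subst hj
    have := congrFun heq j1
    rw [hF] at this; dsimp only at this
    rw [Function.update_self, Function.update_self] at this
    have : δ1 = δ2 := by linear_combination this
    rw [this]
  -- card of S
  have hScard : S.card = t := by
    have h1 : S = univ.filter fun j => (q j).1 = e (a' - C v) := by
      ext j
      simp only [hSdef, mem_filter, mem_univ, true_and]
      show e.symm (q j).1 = a' - C v ↔ _
      rw [Equiv.symm_apply_eq]
    rw [h1]
    have h2 : (univ.filter fun j => (q j).1 = e (a' - C v)).card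
        = (univ.filter fun p : Fin ℓ × Fin t => p.1 = e (a' - C v)).card := by
      apply Finset.card_bij (fun j _ => q j)
      · intro j hj
        simp only [mem_filter, mem_univ, true_and] at hj ⊢
        exact hj
      · intro j1 _ j2 _ h
        exact q.injective h
      · intro p hp
        refine ⟨q.symm p, ?_, by simp⟩
        simp only [mem_filter, mem_univ, true_and] at hp ⊢
        simpa using hp
    rw [h2]
    have h3 : (univ.filter fun p : Fin ℓ × Fin t => p.1 = e (a' - C v))
        = {e (a' - C v)} ×ˢ univ := by
      ext p
      rw [Finset.mem_product, mem_filter]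
      simp
    rw [h3, Finset.card_product]
    simp
  -- card of D
  have hDcard : D.card = if m = 2 then 1 else 2 := by
    by_cases hm' : m = 2
    · subst hm'
      rw [if_pos rfl, hD]
      decide
    · rw [if_neg hm', hD]
      rw [Finset.card_insert_of_notMem, Finset.card_singleton]
      rw [Finset.mem_singleton]
      intro h
      have h2 : (2 : ZMod m) = 0 := by linear_combination h
      have : (m : ℕ) ∣ 2 := by
        have := (ZMod.natCast_eq_zero_iff 2 m).mp (by exact_mod_cast h2)
        exact this
      exact hm' (le_antisymm (Nat.le_of_dvd two_pos this) hm2)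
  rw [himg, Finset.card_image_of_injOn hinj, Finset.card_product, hScard, hDcard]
  by_cases hm' : m = 2
  · rw [if_pos hm', if_pos hm', ← hn, Nat.mul_div_cancel_left _ hℓpos, mul_one]
  · rw [if_neg hm', if_neg hm', ← hn]
    rw [show 2 * (ℓ * t) = ℓ * (t * 2) by ring, Nat.mul_div_cancel_left _ hℓpos]
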